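/- A cancellative commutative monoid M is quasi-atomic if and only if every nonzero prime ideal of M contains an atom. -/

import Mathlib

/-- An atom of a cancellative commutative additive monoid. -/
def IsAtomElem {M : Type*} [AddCancelCommMonoid M] (a : M) : Prop :=
  ¬ IsAddUnit a ∧ ∀ r s : M, a = r + s → IsAddUnit r ∨ IsAddUnit s

/-- The submonoid generated by the atoms (the atomic elements). -/
def Atomics (M : Type*) [AddCancelCommMonoid M] : AddSubmonoid M :=
  AddSubmonoid.closure {a : M | IsAtomElem a}

/-- M is quasi-atomic: every non-invertible element divides an atomic element. -/
def IsQuasiAtomic (M : Type*) [AddCancelCommMonoid M] : Prop :=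
  ∀ b : M, ¬ IsAddUnit b → ∃ m : M, b + m ∈ Atomics M

/-- A monoid is quasi-atomic if and only if every nonzero (i.e. nonempty) prime
ideal contains an atom. -/
theorem quasiAtomic_iff_every_prime_ideal_contains_atom
    (M : Type*) [AddCancelCommMonoid M] :
    IsQuasiAtomic M ↔
      ∀ P : Set M, P.Nonempty → (∀ r ∈ P, ∀ s : M, r + s ∈ P) → P ≠ Set.univ →
        (∀ r s : M, r + s ∈ P → r ∈ P ∨ s ∈ P) → ∃ a ∈ P, IsAtomElem a := by
  constructor
  · intro hqa P hne hideal hproper hprime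
    -- P contains no 0
    have h0 : (0 : M) ∉ P := by
      intro h0
      apply hproper
      ext x
      simp only [Set.mem_univ, iff_true]
      simpa using hideal 0 h0 x
    -- P contains no unit
    have hunit : ∀ u ∈ P, ¬ IsAddUnit u := by
      intro u hu huu
      obtain ⟨v, hv⟩ := huu.exists_neg
      exact h0 (hv ▸ hideal u hu v)
    obtain ⟨b, hb⟩ := hne
    obtain ⟨m, hm⟩ := hqa b (hunit b hb)
    have hbm : b + m ∈ P := hideal b hb m
    -- extract an atom from the atomic element b + m ∈ P
    have key : ∀ x ∈ Atomics M, x ∈ P → ∃ a ∈ P, IsAtomElem a := by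
      intro x hx
      induction hx using AddSubmonoid.closure_induction with
      | mem a ha => exact fun haP => ⟨a, haP, ha⟩
      | zero => exact fun h => absurd h h0
      | add r s _ _ ihr ihs =>
        intro hrs
        rcases hprime r s hrs with h | h
        · exact ihr h
        · exact ihs h
    exact key _ hm hbm
  · intro H b hb
    by_contra hcon
    push_neg at hcon
    set P : Set M := {x | ∀ m : M, x + m ∉ Atomics M} with hP
    have hbP : b ∈ P := fun m hm => hcon m hm
    have hideal : ∀ r ∈ P, ∀ s : M, r + s ∈ P := by
      intro r hr s m hm
      exact hr (s + m) (by rwa [← add_assoc])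
    have hproper : P ≠ Set.univ := by
      intro h
      have : (0 : M) ∈ P := h ▸ Set.mem_univ 0
      exact this 0 (by simpa using (Atomics M).zero_mem)
    have hprime : ∀ r s : M, r + s ∈ P → r ∈ P ∨ s ∈ P := by
      intro r s hrs
      by_contra hc
      push_neg at hc
      obtain ⟨⟨m, hm⟩, ⟨n, hn⟩⟩ : (∃ m, r + m ∈ Atomics M) ∧ (∃ n, s + n ∈ Atomics M) := by
        constructor
        · by_contra h; exact hc.1 (fun m hm => h ⟨m, hm⟩)
        · by_contra h; exact hc.2 (fun n hn => h ⟨n, hn⟩)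
      have : (r + s) + (m + n) ∈ Atomics M := by
        have := (Atomics M).add_mem hm hn
        convert this using 1
        abel
      exact hrs (m + n) this
    obtain ⟨a, haP, ha⟩ := H P ⟨b, hbP⟩ hideal hproper hprime
    exact haP 0 (by rw [add_zero]; exact AddSubmonoid.subset_closure ha)
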